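/- Let Q : ℕ → ℝ satisfy Q(2) = 1 and, for all integers n ≥ 3, Q(n) = Q(n−1) − (2·(n−2)/n²)·Q(n−1)². Then for all n ≥ 2, Q(n) ≤ 1/(H_n − 1), where H_n = ∑_{k=1}^n 1/k is the n-th harmonic number. -/

import Mathlib

open Finset

set_option maxHeartbeats 1000000 in
/-- Under the optimized recurrence `Q(n) = Q(n−1) − (2(n−2)/n²)·Q(n−1)²` with
`Q(2) = 1`, we have `Q(n) ≤ 1/(H_n − 1)` for all `n ≥ 2`. -/
theorem optimized_Q_upper_bound (Q : ℕ → ℝ) (hQ2 : Q 2 = 1)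
    (hrec : ∀ n : ℕ, 3 ≤ n →
      Q n = Q (n - 1) - (2 * ((n : ℝ) - 2) / (n : ℝ) ^ 2) * Q (n - 1) ^ 2) :
    ∀ n : ℕ, 2 ≤ n →
      Q n ≤ 1 / ((∑ k ∈ Finset.Icc 1 n, (1 : ℝ) / k) - 1) := by
  have hS : ∀ n : ℕ, 2 ≤ n → (1:ℝ)/2 ≤ (∑ k ∈ Finset.Icc 1 n, (1 : ℝ) / k) - 1 := by
    intro n hn
    induction n with
    | zero => omega
    | succ m ih =>
      rcases Nat.lt_or_ge m 2 with h | h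
      · interval_cases m
        · omega
        · norm_num [show Finset.Icc 1 2 = {1,2} from by decide]
      · have h1 := ih h
        rw [Finset.sum_Icc_succ_top (by omega : 1 ≤ m+1)]
        have h2 : (0:ℝ) ≤ 1/((m:ℝ)+1) := by positivity
        push_cast
        linarith
  have hQ3 : Q 3 = 7/9 := by
    have h3 := hrec 3 (le_refl 3)
    norm_num [hQ2] at h3
    linarith [h3]
  have key : ∀ n : ℕ, 3 ≤ n → 0 ≤ Q n ∧ Q n ≤ 1 / ((∑ k ∈ Finset.Icc 1 n, (1 : ℝ) / k) - 1) := by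
    intro n hn
    induction n, hn using Nat.le_induction with
    | base =>
      rw [hQ3]
      norm_num [show Finset.Icc 1 3 = {1,2,3} from by decide]
    | succ n hn ih =>
      obtain ⟨hx0, hx⟩ := ih
      have hS2 : (1:ℝ)/2 ≤ (∑ k ∈ Finset.Icc 1 n, (1 : ℝ) / k) - 1 := hS n (by omega)
      have hrec' := hrec (n+1) (by omega)
      simp only [Nat.add_sub_cancel] at hrec'
      rw [Finset.sum_Icc_succ_top (by omega : 1 ≤ n+1), hrec']
      push_cast at hrec' ⊢
      set S : ℝ := (∑ k ∈ Finset.Icc 1 n, (1 : ℝ) / k) - 1 with hSdef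
      set x := Q n with hxdef
      set m : ℝ := (n:ℝ)+1 with hmdef
      have hm : (4:ℝ) ≤ m := by
        rw [hmdef]
        have h4 : (4:ℕ) ≤ n+1 := by omega
        calc (4:ℝ) = ((4:ℕ):ℝ) := by norm_num
          _ ≤ ((n+1:ℕ):ℝ) := by exact_mod_cast h4
          _ = (n:ℝ)+1 := by push_cast; ring
      rw [show (∑ k ∈ Finset.Icc 1 n, (1:ℝ)/(k:ℝ)) + 1/m - 1 = S + 1/m from by
        rw [hSdef]; ring]
      clear_value S x m
      clear hrec' hxdef hSdef hmdef hrec hS hQ2 hQ3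
      have hS0 : (0:ℝ) < S := by linarith
      have hm0 : (0:ℝ) < m := by linarith
      set c : ℝ := 2*(m-2)/m^2 with hcdef
      have hcm : c * m^2 = 2*(m-2) := by rw [hcdef]; field_simp
      have hc0 : 0 ≤ c := div_nonneg (by linarith) (by positivity)
      have hc4 : c ≤ 1/4 := by
        rw [hcdef, div_le_div_iff₀ (by positivity) (by norm_num)]
        nlinarith
      clear_value c
      clear hcdef
      have hinvS : 1/S ≤ 2 := by rw [div_le_iff₀ hS0]; linarith
      have hx2 : x ≤ 2 := hx.trans hinvS
      have hfac : 0 ≤ (1/S - x) * (1 - c*(1/S + x)) := by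
        apply mul_nonneg (by linarith)
        nlinarith [mul_nonneg hc0 (show (0:ℝ) ≤ 4 - (1/S+x) by linarith)]
      have h1 : x - c * x^2 ≤ 1/S - c*(1/S)^2 := by nlinarith [hfac]
      have hS' : (0:ℝ) < S + 1/m := by positivity
      have hmS1 : (0:ℝ) < m*S + 1 := by nlinarith
      have key2 : S * m^2 ≤ c*m^2*(m*S+1) := by
        rw [hcm]
        nlinarith [mul_nonneg (mul_nonneg (show (0:ℝ) ≤ m-4 by linarith) hS0.le) hm0.le]
      have hkey3 : S ≤ c*(m*S+1) := by
        have := key2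
        have h := mul_le_mul_of_nonneg_right (le_refl S) (show (0:ℝ) ≤ m^2 by positivity)
        nlinarith [sq_nonneg m]
      have e2 : 1/(S + 1/m) = m/(m*S+1) := by
        rw [eq_div_iff (by positivity)]
        field_simp
      have h2 : 1/S - c*(1/S)^2 ≤ 1/(S + 1/m) := by
        have e1 : 1/S - c*(1/S)^2 = (S - c)/S^2 := by field_simp
        rw [e1, e2, div_le_div_iff₀ (by positivity) hmS1]
        nlinarith [hkey3]
      have hcx : c * x ≤ 1 := by nlinarith [mul_le_mul hc4 hx2 hx0 (by norm_num : (0:ℝ) ≤ 1/4)]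
      have hpos : 0 ≤ x - c * x^2 := by nlinarith [mul_nonneg hx0 (show (0:ℝ) ≤ 1 - c*x by linarith)]
      exact ⟨hpos, by linarith⟩
  intro n hn
  rcases Nat.lt_or_ge n 3 with h | h
  · have hn2 : n = 2 := by omega
    subst hn2
    norm_num [show Finset.Icc 1 2 = {1,2} from by decide, hQ2]
  · exact (key n h).2
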